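/- Let D₁,…,D_m and E₁,…,E_n be N×N complex matrices such that all of D₂,…,D_m, E₂,…,E_n are normal and the whole family {Dᵢ, Eⱼ} pairwise commutes and also commutes with the adjoints of each other (i.e. they are simultaneously unitarily diagonalizable), with D₁ = E₁ = 𝟙. Let T be the N × (mnN) matrix T = (D₁,…,D_m) ⊗ (E₁,…,E_n) (row block structure: the (i,j) block of T is DᵢEⱼ viewed appropriately, i.e. T has (i,j)-th N×N block equal to Dᵢ Eⱼ as a row of blocks). Then ρ = T*T is fully separable as a state on ℂ^m ⊗ ℂ^n ⊗ ℂ^N. -/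

import Mathlib

open Matrix Kronecker ComplexOrder

/-- Full separability on ℂᵃ⊗ℂᵇ⊗ℂᶜ: a finite sum of tensor products of
positive semidefinite matrices on the three factors. -/
def Sep3 {a b c : ℕ} (ρ : Matrix (Fin a × Fin b × Fin c) (Fin a × Fin b × Fin c) ℂ) : Prop :=
  ∃ (n : ℕ) (A : Fin n → Matrix (Fin a) (Fin a) ℂ)
    (B : Fin n → Matrix (Fin b) (Fin b) ℂ)
    (C : Fin n → Matrix (Fin c) (Fin c) ℂ),
    (∀ i, (A i).PosSemidef) ∧ (∀ i, (B i).PosSemidef) ∧ (∀ i, (C i).PosSemidef) ∧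
    ρ = ∑ i, A i ⊗ₖ (B i ⊗ₖ C i)


open Matrix Module.End in
/-- Joint unitary diagonalization of a commuting family of normal matrices,
phrased concretely in terms of an orthonormal family of joint eigenvectors. -/
lemma exists_joint_eigenbasis {κ : Type} [Fintype κ] {N : ℕ}
    (F : κ → Matrix (Fin N) (Fin N) ℂ)
    (hc : ∀ i j, F i * F j = F j * F i)
    (hca : ∀ i j, F i * (F j)ᴴ = (F j)ᴴ * F i) :
    ∃ (P : Type) (_ : Fintype P) (_ : DecidableEq P) (v : P → (Fin N → ℂ)) (lam : κ → P → ℂ),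
      (∀ p q, ∑ k, star (v p k) * v q k = if p = q then (1:ℂ) else 0) ∧
      (∀ k l, ∑ p, v p k * star (v p l) = (1 : Matrix (Fin N) (Fin N) ℂ) k l) ∧
      (∀ i p, F i *ᵥ v p = lam i p • v p) := by
  classical
  -- Hermitian and anti-Hermitian parts
  set G : κ × Bool → Matrix (Fin N) (Fin N) ℂ :=
    fun a => (if a.2 then -Complex.I else 1) • F a.1
      + (if a.2 then Complex.I else 1) • (F a.1)ᴴ with hGdef
  have hca' : ∀ i j, (F i)ᴴ * (F j)ᴴ = (F j)ᴴ * (F i)ᴴ := by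
    intro i j
    have := congrArg conjTranspose (hc j i)
    simpa [conjTranspose_mul] using this
  have hca'' : ∀ i j, (F i)ᴴ * F j = F j * (F i)ᴴ := fun i j => (hca j i).symm
  have hGherm : ∀ a, (G a).IsHermitian := by
    rintro ⟨i, (_|_)⟩ <;>
      simp [hGdef, Matrix.IsHermitian, conjTranspose_add, conjTranspose_smul, add_comm]
  have hGcomm : ∀ a b, G a * G b = G b * G a := by
    rintro ⟨i, s⟩ ⟨j, t⟩
    simp only [hGdef]
    simp only [add_mul, mul_add, smul_mul_assoc, mul_smul_comm, smul_smul]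
    rw [hc i j, hca i j, hca'' i j, hca' i j]
    module
  -- pass to symmetric endomorphisms of Euclidean space
  set T : κ × Bool → Module.End ℂ (EuclideanSpace ℂ (Fin N)) := fun a => Matrix.toEuclideanLin (G a) with hTdef
  have hmul : ∀ A B : Matrix (Fin N) (Fin N) ℂ,
      Matrix.toEuclideanLin A * Matrix.toEuclideanLin B = Matrix.toEuclideanLin (A * B) := by
    intro A B
    apply LinearMap.ext
    intro x
    show Matrix.toEuclideanLin A (Matrix.toEuclideanLin B x) = _
    simp [Matrix.toEuclideanLin_apply, Matrix.mulVec_mulVec]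
  have hsym : ∀ a, (T a).IsSymmetric := fun a =>
    Matrix.isHermitian_iff_isSymmetric.mp (hGherm a)
  have hcommT : Pairwise (Function.onFun Commute T) := by
    intro a b _
    show T a * T b = T b * T a
    simp only [hTdef, hmul, hGcomm a b]
  set W : (κ × Bool → ℂ) → Submodule ℂ (EuclideanSpace ℂ (Fin N)) := fun χ => ⨅ a, eigenspace (T a) (χ a) with hWdef
  have hint : DirectSum.IsInternal W :=
    LinearMap.IsSymmetric.LinearMap.IsSymmetric.directSum_isInternal_of_pairwise_commute
      hsym hcommT
  have horth := LinearMap.IsSymmetric.orthogonalFamily_iInf_eigenspaces (T := T) hsym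
  set bas := hint.collectedBasis (fun χ => (stdOrthonormalBasis ℂ (W χ)).toBasis) with hbas
  have hON : Orthonormal ℂ bas :=
    hint.collectedBasis_orthonormal horth
      (fun χ => by simpa using (stdOrthonormalBasis ℂ (W χ)).orthonormal)
  haveI : Fintype ((χ : κ × Bool → ℂ) × Fin (Module.finrank ℂ (W χ))) :=
    FiniteDimensional.fintypeBasisIndex bas
  set b := bas.toOrthonormalBasis hON with hbdef
  set v : ((χ : κ × Bool → ℂ) × Fin (Module.finrank ℂ (W χ))) → (Fin N → ℂ) :=
    fun p k => b p k with hvdef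
  -- eigenvector property for the G's
  have hGv : ∀ (a : κ × Bool) p, G a *ᵥ v p = p.1 a • v p := by
    intro a p
    have hmem : bas p ∈ W p.1 := hint.collectedBasis_mem _ p
    have h : T a (b p) = p.1 a • b p := by
      rw [hbdef, Module.Basis.coe_toOrthonormalBasis]
      exact mem_eigenspace_iff.mp ((Submodule.mem_iInf _).mp hmem a)
    have h' := congrArg WithLp.ofLp h
    simpa [hTdef, Matrix.toEuclideanLin_apply, hvdef] using h'
  refine ⟨_, inferInstance, inferInstance, v,
    fun i p => (p.1 (i, false) + Complex.I * p.1 (i, true)) / 2, ?_, ?_, ?_⟩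
  · -- orthonormality
    intro p q
    have h := orthonormal_iff_ite.mp b.orthonormal p q
    simp only [PiLp.inner_apply, RCLike.inner_apply] at h
    simp only [RCLike.star_def]; rw [← h]; exact Finset.sum_congr rfl fun x _ => mul_comm _ _
  · -- completeness
    intro k l
    have h := congrArg (fun x => x k) (b.sum_repr' (EuclideanSpace.single l (1:ℂ)))
    simp only [EuclideanSpace.inner_single_right, one_mul] at h
    simp only [WithLp.ofLp_sum, Finset.sum_apply, PiLp.smul_apply, smul_eq_mul, EuclideanSpace.single_apply] at h
    rw [Matrix.one_apply]
    rw [← h]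
    apply Finset.sum_congr rfl
    intro p _
    ring_nf
    exact mul_comm _ _
  · -- eigenvector property
    intro i p
    set x := F i *ᵥ v p with hx
    set y := (F i)ᴴ *ᵥ v p with hy
    have h0 : x + y = p.1 (i, false) • v p := by
      have := hGv (i, false) p
      simpa [hGdef, Matrix.add_mulVec, Matrix.smul_mulVec] using this
    have h1 : -(Complex.I • x) + Complex.I • y = p.1 (i, true) • v p := by
      have := hGv (i, true) p
      simpa [hGdef, Matrix.add_mulVec, Matrix.smul_mulVec, Matrix.neg_mulVec] using this
    have h2 : (2:ℂ) • x = p.1 (i, false) • v p + Complex.I • (p.1 (i, true) • v p) := by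
      rw [← h0, ← h1, smul_add, smul_neg, smul_smul, smul_smul, Complex.I_mul_I]
      module
    have h4 : (2:ℂ) • x =
        (2:ℂ) • (((p.1 (i, false) + Complex.I * p.1 (i, true)) / 2) • v p) := by
      rw [h2]; module
    exact smul_right_injective _ two_ne_zero h4


lemma entry_eq {N : ℕ} {P : Type} [Fintype P]
    (v : P → (Fin N → ℂ))
    (hb : ∀ k l, ∑ p, v p k * star (v p l) = (1 : Matrix (Fin N) (Fin N) ℂ) k l)
    (M : Matrix (Fin N) (Fin N) ℂ) (μ : P → ℂ)
    (h : ∀ p, M *ᵥ v p = μ p • v p) (k l : Fin N) :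
    M k l = ∑ p, μ p * (v p k * star (v p l)) := by
  calc M k l = (M * (1 : Matrix (Fin N) (Fin N) ℂ)) k l := by rw [Matrix.mul_one]
    _ = ∑ t, M k t * (1 : Matrix (Fin N) (Fin N) ℂ) t l := Matrix.mul_apply
    _ = ∑ t, M k t * ∑ p, v p t * star (v p l) := by simp_rw [hb]
    _ = ∑ t, ∑ p, M k t * (v p t * star (v p l)) := by simp_rw [Finset.mul_sum]
    _ = ∑ p, ∑ t, M k t * (v p t * star (v p l)) := Finset.sum_comm
    _ = ∑ p, (M *ᵥ v p) k * star (v p l) := by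
        refine Finset.sum_congr rfl fun p _ => ?_
        simp [Matrix.mulVec, dotProduct, Finset.sum_mul, mul_assoc]
    _ = ∑ p, μ p * (v p k * star (v p l)) := by
        refine Finset.sum_congr rfl fun p _ => ?_
        rw [h p]
        simp [mul_assoc]

lemma sum_star_mul {N : ℕ} {P : Type} [Fintype P] [DecidableEq P]
    (v : P → (Fin N → ℂ))
    (ha : ∀ p q, ∑ k, star (v p k) * v q k = if p = q then (1:ℂ) else 0)
    (μ ν : P → ℂ) (l l' : Fin N) :
    ∑ k, star (∑ p, μ p * (v p k * star (v p l))) * (∑ p, ν p * (v p k * star (v p l'))) =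
      ∑ p, (star (μ p) * ν p) * (v p l * star (v p l')) := by
  have key : ∀ k, star (∑ p, μ p * (v p k * star (v p l)))
        * (∑ p, ν p * (v p k * star (v p l')))
      = ∑ p, ∑ q, (star (μ p) * v p l * (ν q * star (v q l'))) * (star (v p k) * v q k) := by
    intro k
    rw [star_sum, Finset.sum_mul_sum]
    refine Finset.sum_congr rfl fun p _ => Finset.sum_congr rfl fun q _ => ?_
    simp only [star_mul', star_star]
    ring
  rw [Finset.sum_congr rfl (fun k _ => key k), Finset.sum_comm]
  refine Finset.sum_congr rfl fun p _ => ?_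
  rw [Finset.sum_comm]
  calc ∑ q, ∑ k, (star (μ p) * v p l * (ν q * star (v q l'))) * (star (v p k) * v q k)
      = ∑ q, (star (μ p) * v p l * (ν q * star (v q l'))) * ∑ k, star (v p k) * v q k := by
        simp_rw [Finset.mul_sum]
    _ = ∑ q, (star (μ p) * v p l * (ν q * star (v q l'))) * (if p = q then (1:ℂ) else 0) := by
        simp_rw [ha]
    _ = star (μ p) * v p l * (ν p * star (v p l')) := by
        simp [mul_ite, Finset.sum_ite_eq]
    _ = (star (μ p) * ν p) * (v p l * star (v p l')) := by ring

theorem stmt9 {m n N : ℕ} (D : Fin (m + 1) → Matrix (Fin N) (Fin N) ℂ)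
    (E : Fin (n + 1) → Matrix (Fin N) (Fin N) ℂ)
    (hD0 : D 0 = 1) (hE0 : E 0 = 1)
    (hnormal : ∀ F ∈ Set.range D ∪ Set.range E, F * Fᴴ = Fᴴ * F)
    (hcomm : ∀ F ∈ Set.range D ∪ Set.range E, ∀ G ∈ Set.range D ∪ Set.range E,
      F * G = G * F ∧ F * Gᴴ = Gᴴ * F) :
    letI T : Matrix (Fin N) (Fin (m + 1) × Fin (n + 1) × Fin N) ℂ :=
      fun k q => (D q.1 * E q.2.1) k q.2.2
    Sep3 (Tᴴ * T) := by
  show Sep3 ((Matrix.of (fun k (q : Fin (m + 1) × Fin (n + 1) × Fin N) => (D q.1 * E q.2.1) k q.2.2))ᴴ *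
    Matrix.of (fun k (q : Fin (m + 1) × Fin (n + 1) × Fin N) => (D q.1 * E q.2.1) k q.2.2))
  set F : (Fin (m + 1) ⊕ Fin (n + 1)) → Matrix (Fin N) (Fin N) ℂ := Sum.elim D E with hF
  have hmem : ∀ i, F i ∈ Set.range D ∪ Set.range E := by
    rintro (i | j)
    · exact Or.inl ⟨i, rfl⟩
    · exact Or.inr ⟨j, rfl⟩
  have hc1 : ∀ i j, F i * F j = F j * F i := fun i j => (hcomm _ (hmem i) _ (hmem j)).1
  have hc2 : ∀ i j, F i * (F j)ᴴ = (F j)ᴴ * F i := fun i j => (hcomm _ (hmem i) _ (hmem j)).2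
  obtain ⟨P, _, _, v, lam, ha, hb, hev⟩ := exists_joint_eigenbasis F hc1 hc2
  have hevDE : ∀ (i : Fin (m + 1)) (j : Fin (n + 1)) (p : P), (D i * E j) *ᵥ v p
      = (lam (Sum.inl i) p * lam (Sum.inr j) p) • v p := by
    intro i j p
    have hDp : D i *ᵥ v p = lam (Sum.inl i) p • v p := hev (Sum.inl i) p
    have hEp : E j *ᵥ v p = lam (Sum.inr j) p • v p := hev (Sum.inr j) p
    rw [← Matrix.mulVec_mulVec, hEp, Matrix.mulVec_smul, hDp, smul_smul, mul_comm]
  set e : Fin (Fintype.card P) ≃ P := (Fintype.equivFin P).symm with he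
  refine ⟨Fintype.card P,
    fun t => (Matrix.of (fun (_ : Fin 1) i => lam (Sum.inl i) (e t)))ᴴ *
      (Matrix.of (fun (_ : Fin 1) i => lam (Sum.inl i) (e t))),
    fun t => (Matrix.of (fun (_ : Fin 1) j => lam (Sum.inr j) (e t)))ᴴ *
      (Matrix.of (fun (_ : Fin 1) j => lam (Sum.inr j) (e t))),
    fun t => (Matrix.of (fun (_ : Fin 1) l => star (v (e t) l)))ᴴ *
      (Matrix.of (fun (_ : Fin 1) l => star (v (e t) l))),
    fun t => posSemidef_conjTranspose_mul_self _,
    fun t => posSemidef_conjTranspose_mul_self _,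
    fun t => posSemidef_conjTranspose_mul_self _, ?_⟩
  ext ⟨i, j, l⟩ ⟨i', j', l'⟩
  rw [Matrix.mul_apply, Matrix.sum_apply]
  simp only [Matrix.conjTranspose_apply, Matrix.kroneckerMap_apply, Matrix.mul_apply,
    Fin.sum_univ_one]
  calc ∑ k, star ((D i * E j) k l) * ((D i' * E j') k l')
      = ∑ k, star (∑ p, (lam (Sum.inl i) p * lam (Sum.inr j) p) * (v p k * star (v p l))) *
          (∑ p, (lam (Sum.inl i') p * lam (Sum.inr j') p) * (v p k * star (v p l'))) := by
        simp_rw [entry_eq v hb (D i * E j) _ (hevDE i j),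
          entry_eq v hb (D i' * E j') _ (hevDE i' j')]
    _ = ∑ p, (star (lam (Sum.inl i) p * lam (Sum.inr j) p) *
          (lam (Sum.inl i') p * lam (Sum.inr j') p)) * (v p l * star (v p l')) :=
        sum_star_mul v ha _ _ l l'
    _ = _ := by
        refine (Fintype.sum_equiv e _ _ fun t => ?_).symm
        simp only [Matrix.of_apply, star_mul', star_star]
        ring
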